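/- For fixed D ∈ ℝ and a* > 0, define F(ξ) = (4D/ξ)∑_{m=1}^∞ (−1)^m (exp(−a*(2m−1)²π²ξ) − 1)/((2m−1)³π³) for ξ > 0. Then F(ξ) → a*·D as ξ → 0⁺. -/

import Mathlib

open Real Filter Topology

lemma gt_aux_slope (c : ℝ) :
    Tendsto (fun ξ : ℝ => (Real.exp (-(c * ξ)) - 1) / ξ) (𝓝[>] (0:ℝ)) (𝓝 (-c)) := by
  have h1 : HasDerivAt (fun ξ : ℝ => -(c * ξ)) (-c) 0 := by
    simpa [Pi.neg_def] using (((hasDerivAt_id (0:ℝ)).const_mul c).neg)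
  have h : HasDerivAt (fun ξ : ℝ => Real.exp (-(c * ξ))) (-c) 0 := by
    simpa using h1.exp
  have h2 := hasDerivAt_iff_tendsto_slope.mp h
  have h3 : Tendsto (fun ξ : ℝ => (Real.exp (-(c * ξ)) - 1) / ξ) (𝓝[≠] (0:ℝ)) (𝓝 (-c)) := by
    refine Tendsto.congr' ?_ h2
    filter_upwards [self_mem_nhdsWithin] with ξ hξ
    simp [slope_fun_def_field, mul_zero, Real.exp_zero]
  exact h3.mono_left (nhdsWithin_mono _ (fun x hx => ne_of_gt hx))

lemma gt_aux_summable_sq : Summable (fun k : ℕ => 1 / ((k:ℝ)+1)^2) := by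
  have := (summable_nat_add_iff 1).mpr (summable_one_div_nat_pow.mpr (by norm_num : 1 < 2))
  simpa [add_comm] using this

lemma gt_aux_poly (x : ℝ) (hx : 0 ≤ x) :
    (10*(4*x+1)^2 + 16*(4*x+1) + 8) * (x+1)^2 ≤ 30 * ((4*x+1)*(4*x+3)^3) := by
  nlinarith [mul_nonneg hx hx, mul_nonneg (mul_nonneg hx hx) hx,
    mul_nonneg (mul_nonneg (mul_nonneg hx hx) hx) hx]

lemma gt_aux_summable_cube : Summable (fun k : ℕ => 1 / ((k:ℝ)+1)^3) := by
  have := (summable_nat_add_iff 1).mpr (summable_one_div_nat_pow.mpr (by norm_num : 1 < 3))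
  simpa [add_comm] using this


lemma gt_aux_A1 (a p x : ℝ) (hp : p ≠ 0) (h1 : (4*x+1) ≠ 0) (h3 : (4*x+3) ≠ 0) :
    -(-(a*(4*x+1)^2*p^2))/((4*x+1)^3*p^3) + (-(a*(4*x+3)^2*p^2))/((4*x+3)^3*p^3)
      = a*((4*x+1)*p)⁻¹ - a*((4*x+3)*p)⁻¹ := by
  field_simp
  ring

lemma gt_aux_A2 (a p x : ℝ) (hp : p ≠ 0) (h1 : (4*x+1) ≠ 0) (h3 : (4*x+3) ≠ 0) :
    a*(4*x+1)^2*p^2 * (1/((4*x+1)^3*p^3) - 1/((4*x+3)^3*p^3))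
        + (a*(4*x+3)^2*p^2 - a*(4*x+1)^2*p^2)/((4*x+3)^3*p^3)
      = (a/p) * ((10*(4*x+1)^2 + 16*(4*x+1) + 8) / ((4*x+1)*(4*x+3)^3)) := by
  field_simp
  ring

lemma gt_aux_A5 (a p x : ℝ) (hp : p ≠ 0) (h1 : (4*x+1) ≠ 0) (h3 : (4*x+3) ≠ 0) :
    a*((4*x+1)*p)⁻¹ - a*((4*x+3)*p)⁻¹ = a/p * (1/(4*x+1) - 1/(4*x+3)) := by
  field_simp

lemma gt_aux_A3 (a p x : ℝ) (ha : 0 ≤ a) (hp : 0 < p) (hx : 0 ≤ x) :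
    0 ≤ a*((4*x+1)*p)⁻¹ - a*((4*x+3)*p)⁻¹ := by
  have h1 : (0:ℝ) < (4*x+1)*p := by positivity
  have h3 : (0:ℝ) < (4*x+3)*p := by positivity
  have hle : ((4*x+3)*p)⁻¹ ≤ ((4*x+1)*p)⁻¹ := by
    apply inv_anti₀ h1
    nlinarith
  nlinarith [mul_le_mul_of_nonneg_left hle ha]

lemma gt_aux_A4 (a p x : ℝ) (ha : 0 ≤ a) (hp : 0 < p) (hx : 0 ≤ x) :
    a*((4*x+1)*p)⁻¹ - a*((4*x+3)*p)⁻¹ ≤ (2*a/p) * (1/(x+1)^2) := by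
  have h1 : (0:ℝ) < 4*x+1 := by positivity
  have h3 : (0:ℝ) < 4*x+3 := by positivity
  have hrw : a*((4*x+1)*p)⁻¹ - a*((4*x+3)*p)⁻¹ = (a/p) * (2/((4*x+1)*(4*x+3))) := by
    field_simp
    ring
  rw [hrw, show (2*a/p) * (1/(x+1)^2) = (a/p) * (2/(x+1)^2) by ring]
  apply mul_le_mul_of_nonneg_left _ (by positivity)
  apply div_le_div_of_nonneg_left (by norm_num) (by positivity)
  nlinarith


/-- Consistency limit of the gap-tooth estimator: for fixed `D ∈ ℝ` and
`a* > 0`, the function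
`F(ξ) = (4D/ξ) ∑_{m=1}^∞ (−1)^m (exp(−a*(2m−1)²π²ξ) − 1)/((2m−1)³π³)`
tends to `a* D` as `ξ → 0⁺`. -/
theorem gaptooth_estimator_limit
    (D astar : ℝ) (ha : 0 < astar) :
    Tendsto (fun ξ : ℝ =>
        (4 * D / ξ) * ∑' m : ℕ,
          (-1:ℝ)^(m+1)
            * (Real.exp (-(astar * (2 * ((m:ℝ)+1) - 1)^2 * Real.pi^2 * ξ)) - 1)
            / ((2 * ((m:ℝ)+1) - 1)^3 * Real.pi^3))
      (𝓝[>] 0) (𝓝 (astar * D)) := by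
  have hπ : (0:ℝ) < π := Real.pi_pos
  set f : ℝ → ℕ → ℝ := fun ξ m =>
    (-1:ℝ)^(m+1)
      * (Real.exp (-(astar * (2 * ((m:ℝ)+1) - 1)^2 * Real.pi^2 * ξ)) - 1)
      / ((2 * ((m:ℝ)+1) - 1)^3 * Real.pi^3) with hf
  set c0 : ℕ → ℝ := fun k => astar * (4*(k:ℝ)+1)^2 * π^2 with hc0
  set c1 : ℕ → ℝ := fun k => astar * (4*(k:ℝ)+3)^2 * π^2 with hc1
  set d0 : ℕ → ℝ := fun k => (4*(k:ℝ)+1)^3 * π^3 with hd0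
  set d1 : ℕ → ℝ := fun k => (4*(k:ℝ)+3)^3 * π^3 with hd1
  set P : ℕ → ℝ → ℝ := fun k ξ =>
    ((1 - Real.exp (-(c0 k * ξ)))/(d0 k) - (1 - Real.exp (-(c1 k * ξ)))/(d1 k))/ξ with hP
  set L : ℕ → ℝ := fun k => astar * ((4*(k:ℝ)+1)*π)⁻¹ - astar * ((4*(k:ℝ)+3)*π)⁻¹ with hL
  -- positivity facts
  have hd0pos : ∀ k : ℕ, (0:ℝ) < d0 k := by
    intro k; have : (0:ℝ) < 4*(k:ℝ)+1 := by positivity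
    positivity
  have hd1pos : ∀ k : ℕ, (0:ℝ) < d1 k := by
    intro k; have : (0:ℝ) < 4*(k:ℝ)+3 := by positivity
    positivity
  have hc0pos : ∀ k : ℕ, (0:ℝ) < c0 k := by
    intro k; have : (0:ℝ) < 4*(k:ℝ)+1 := by positivity
    positivity
  have hc01 : ∀ k : ℕ, c0 k ≤ c1 k := by
    intro k; simp only [hc0, hc1]
    have h1 : (0:ℝ) ≤ 4*(k:ℝ)+1 := by positivity
    exact mul_le_mul_of_nonneg_right
      (mul_le_mul_of_nonneg_left (pow_le_pow_left₀ h1 (by linarith) 2) ha.le) (sq_nonneg π)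
  have hd01 : ∀ k : ℕ, d0 k ≤ d1 k := by
    intro k; simp only [hd0, hd1]
    have h1 : (0:ℝ) ≤ 4*(k:ℝ)+1 := by positivity
    exact mul_le_mul_of_nonneg_right (pow_le_pow_left₀ h1 (by linarith) 3) (by positivity)
  -- pair rewriting
  have hpair : ∀ (ξ : ℝ) (k : ℕ), (f ξ (2*k) + f ξ (2*k+1))/ξ = P k ξ := by
    intro ξ k
    have e0 : astar * (2 * (((2*k : ℕ):ℝ)+1) - 1)^2 * Real.pi^2 * ξ = c0 k * ξ := by
      push_cast; simp only [hc0]; ring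
    have e1 : astar * (2 * (((2*k+1 : ℕ):ℝ)+1) - 1)^2 * Real.pi^2 * ξ = c1 k * ξ := by
      push_cast; simp only [hc1]; ring
    have p0 : ((-1:ℝ))^(2*k+1) = -1 := Odd.neg_one_pow ⟨k, by ring⟩
    have p1 : ((-1:ℝ))^(2*k+1+1) = 1 := Even.neg_one_pow ⟨k+1, by ring⟩
    have e2 : ((2 * (((2*k : ℕ):ℝ)+1) - 1)^3 * Real.pi^3) = d0 k := by
      push_cast; simp only [hd0]; ring
    have e3 : ((2 * (((2*k+1 : ℕ):ℝ)+1) - 1)^3 * Real.pi^3) = d1 k := by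
      push_cast; simp only [hd1]; ring
    simp only [hf, hP, e0, e1, e2, e3, p0, p1]
    ring
  -- summability
  have hsumf : ∀ ξ : ℝ, 0 < ξ → Summable (f ξ) := by
    intro ξ hξ
    apply Summable.of_norm_bounded (g := fun m : ℕ => (1/((m:ℝ)+1)^3) * (1/π^3))
      (gt_aux_summable_cube.mul_right _)
    intro m
    have hm1 : (0:ℝ) < (m:ℝ)+1 := by positivity
    have hrw : (2*((m:ℝ)+1) - 1) = 2*(m:ℝ)+1 := by ring
    have hm2 : (0:ℝ) < 2*(m:ℝ)+1 := by positivity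
    have harg : (0:ℝ) ≤ astar * (2 * ((m:ℝ)+1) - 1)^2 * Real.pi^2 * ξ := by
      rw [hrw]; positivity
    have hexp : |Real.exp (-(astar * (2 * ((m:ℝ)+1) - 1)^2 * Real.pi^2 * ξ)) - 1| ≤ 1 := by
      rw [abs_le]
      constructor
      · have := Real.exp_pos (-(astar * (2 * ((m:ℝ)+1) - 1)^2 * Real.pi^2 * ξ)); linarith
      · have h2 : Real.exp (-(astar * (2 * ((m:ℝ)+1) - 1)^2 * Real.pi^2 * ξ)) ≤ Real.exp 0 :=
          Real.exp_le_exp.mpr (by linarith)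
        rw [Real.exp_zero] at h2; linarith
    have hden : ((m:ℝ)+1)^3*π^3 ≤ (2*((m:ℝ)+1) - 1)^3*π^3 := by
      rw [hrw]
      exact mul_le_mul_of_nonneg_right (pow_le_pow_left₀ hm1.le (by linarith) 3) (by positivity)
    have hdenpos : (0:ℝ) < ((m:ℝ)+1)^3*π^3 := by positivity
    have hdpos : (0:ℝ) < (2*((m:ℝ)+1) - 1)^3*π^3 := by rw [hrw]; positivity
    have hnorm : ‖f ξ m‖ = |Real.exp (-(astar * (2 * ((m:ℝ)+1) - 1)^2 * Real.pi^2 * ξ)) - 1|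
        / ((2*((m:ℝ)+1) - 1)^3*π^3) := by
      simp only [hf]
      rw [Real.norm_eq_abs, abs_div, abs_mul, abs_pow, abs_neg, abs_one, one_pow, one_mul,
        abs_of_pos hdpos]
    rw [hnorm, show (1/((m:ℝ)+1)^3) * (1/π^3) = 1/(((m:ℝ)+1)^3*π^3) by
      rw [div_mul_div_comm, one_mul]]
    exact div_le_div₀ (by norm_num) hexp hdenpos hden
  -- eventual equality of the two forms
  have heq : ∀ᶠ ξ in 𝓝[>] (0:ℝ),
      (4 * D / ξ) * ∑' m, f ξ m = 4 * D * ∑' k, P k ξ := by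
    filter_upwards [self_mem_nhdsWithin] with ξ hξ
    have hξ' : (0:ℝ) < ξ := hξ
    have hs := hsumf ξ hξ'
    have he : Summable (fun k => f ξ (2*k)) :=
      hs.comp_injective (fun a b h => by omega)
    have ho : Summable (fun k => f ξ (2*k+1)) :=
      hs.comp_injective (fun a b h => by omega)
    have h1 : ∑' k, P k ξ = (∑' m, f ξ m)/ξ := by
      rw [← tsum_even_add_odd he ho, ← Summable.tsum_add he ho, ← tsum_div_const]
      exact tsum_congr fun k => (hpair ξ k).symm
    rw [h1]; ring
  -- pointwise limits
  have hab : ∀ k : ℕ, Tendsto (fun ξ => P k ξ) (𝓝[>] (0:ℝ)) (𝓝 (L k)) := by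
    intro k
    have t0 := ((gt_aux_slope (c0 k)).neg).div_const (d0 k)
    have t1 := (gt_aux_slope (c1 k)).div_const (d1 k)
    have t2 := t0.add t1
    have hval : -(-(c0 k))/(d0 k) + (-(c1 k))/(d1 k) = L k := by
      simp only [hc0, hc1, hd0, hd1, hL]
      exact gt_aux_A1 astar π (k:ℝ) (ne_of_gt hπ) (by positivity) (by positivity)
    rw [← hval]
    refine t2.congr fun ξ => ?_
    simp only [hP]; ring
  -- uniform bound
  have hb : ∀ᶠ ξ in 𝓝[>] (0:ℝ), ∀ k : ℕ,
      ‖P k ξ‖ ≤ (30*astar/π) * (1/((k:ℝ)+1)^2) := by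
    filter_upwards [self_mem_nhdsWithin] with ξ hξ
    intro k
    have hξ' : (0:ℝ) < ξ := hξ
    set E0 := Real.exp (-(c0 k * ξ)) with hE0
    set E1 := Real.exp (-(c1 k * ξ)) with hE1
    have hc0ξ : 0 < c0 k * ξ := mul_pos (hc0pos k) hξ'
    have hΔ : 0 ≤ (c1 k - c0 k) * ξ := mul_nonneg (by linarith [hc01 k]) hξ'.le
    have hE0pos : 0 < E0 := Real.exp_pos _
    have hE0le1 : E0 ≤ 1 := by
      rw [hE0, ← Real.exp_zero]
      exact Real.exp_le_exp.mpr (by linarith)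
    have hE0lb : 1 - c0 k * ξ ≤ E0 := by
      have := Real.add_one_le_exp (-(c0 k * ξ)); rw [← hE0] at this; linarith
    have hT := Real.add_one_le_exp (-((c1 k - c0 k) * ξ))
    have hTle1 : Real.exp (-((c1 k - c0 k) * ξ)) ≤ 1 := by
      rw [← Real.exp_zero]
      exact Real.exp_le_exp.mpr (by linarith)
    have hsplit : E1 = E0 * Real.exp (-((c1 k - c0 k) * ξ)) := by
      rw [hE0, hE1, ← Real.exp_add]; congr 1; ring
    have hE10 : E1 ≤ E0 := by
      rw [hsplit]
      nlinarith [hE0pos.le]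
    have hdiffle : E0 - E1 ≤ (c1 k - c0 k) * ξ := by
      have key : E0 * (1 - Real.exp (-((c1 k - c0 k) * ξ)))
          ≤ 1 - Real.exp (-((c1 k - c0 k) * ξ)) := by
        nlinarith [hE0pos.le]
      rw [hsplit]; nlinarith
    have hdec : P k ξ = ((1-E0)/ξ) * (1/(d0 k) - 1/(d1 k)) - ((E0-E1)/ξ)/(d1 k) := by
      simp only [hP, ← hE0, ← hE1]; ring
    have hA1 : 0 ≤ (1-E0)/ξ := div_nonneg (by linarith) hξ'.le
    have hA2 : (1-E0)/ξ ≤ c0 k := by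
      rw [div_le_iff₀ hξ']; linarith
    have hBfrac : 0 ≤ 1/(d0 k) - 1/(d1 k) := by
      have := one_div_le_one_div_of_le (hd0pos k) (hd01 k)
      linarith
    have hC1 : 0 ≤ (E0-E1)/ξ := div_nonneg (by linarith) hξ'.le
    have hC2 : (E0-E1)/ξ ≤ c1 k - c0 k := by
      rw [div_le_iff₀ hξ']; linarith
    have habs : ‖P k ξ‖ ≤ c0 k * (1/(d0 k) - 1/(d1 k)) + (c1 k - c0 k)/(d1 k) := by
      rw [Real.norm_eq_abs, hdec]
      have t1 : |((1-E0)/ξ) * (1/(d0 k) - 1/(d1 k))| ≤ c0 k * (1/(d0 k) - 1/(d1 k)) := by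
        rw [abs_of_nonneg (mul_nonneg hA1 hBfrac)]
        exact mul_le_mul_of_nonneg_right hA2 hBfrac
      have t2 : |((E0-E1)/ξ)/(d1 k)| ≤ (c1 k - c0 k)/(d1 k) := by
        rw [abs_of_nonneg (div_nonneg hC1 (hd1pos k).le)]
        exact (div_le_div_iff_of_pos_right (hd1pos k)).mpr hC2
      calc |((1-E0)/ξ) * (1/(d0 k) - 1/(d1 k)) - ((E0-E1)/ξ)/(d1 k)|
          ≤ |((1-E0)/ξ) * (1/(d0 k) - 1/(d1 k))| + |((E0-E1)/ξ)/(d1 k)| := abs_sub _ _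
        _ ≤ _ := add_le_add t1 t2
    refine habs.trans ?_
    -- pure algebra
    have hK : (0:ℝ) ≤ (k:ℝ) := Nat.cast_nonneg k
    have h1 : (0:ℝ) < 4*(k:ℝ)+1 := by positivity
    have h3 : (0:ℝ) < 4*(k:ℝ)+3 := by positivity
    have hval2 : c0 k * (1/(d0 k) - 1/(d1 k)) + (c1 k - c0 k)/(d1 k)
        = (astar/π) * ((10*(4*(k:ℝ)+1)^2 + 16*(4*(k:ℝ)+1) + 8)
            / ((4*(k:ℝ)+1)*(4*(k:ℝ)+3)^3)) := by
      simp only [hc0, hc1, hd0, hd1]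
      exact gt_aux_A2 astar π (k:ℝ) (ne_of_gt hπ) (by positivity) (by positivity)
    rw [hval2, show (30*astar/π) * (1/((k:ℝ)+1)^2) = (astar/π) * (30/((k:ℝ)+1)^2) by ring]
    apply mul_le_mul_of_nonneg_left _ (by positivity)
    rw [div_le_div_iff₀ (by positivity) (by positivity)]
    exact gt_aux_poly ((k:ℝ)) hK
  -- dominated convergence
  have hbound_sum : Summable (fun k : ℕ => (30*astar/π) * (1/((k:ℝ)+1)^2)) :=
    gt_aux_summable_sq.mul_left _
  have hmain : Tendsto (fun ξ => ∑' k, P k ξ) (𝓝[>] (0:ℝ)) (𝓝 (∑' k, L k)) := by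
    exact tendsto_tsum_of_dominated_convergence hbound_sum hab hb
  -- value of the limit sum
  have hLnonneg : ∀ k : ℕ, 0 ≤ L k := by
    intro k; simp only [hL]
    exact gt_aux_A3 astar π (k:ℝ) ha.le hπ (Nat.cast_nonneg k)
  have hLle : ∀ k : ℕ, L k ≤ (2*astar/π) * (1/((k:ℝ)+1)^2) := by
    intro k; simp only [hL]
    exact gt_aux_A4 astar π (k:ℝ) ha.le hπ (Nat.cast_nonneg k)
  have hLsummable : Summable L :=
    Summable.of_nonneg_of_le hLnonneg hLle (gt_aux_summable_sq.mul_left _)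
  have hps : ∀ K : ℕ, ∑ k ∈ Finset.range K, L k
      = (astar/π) * ∑ i ∈ Finset.range (2*K), ((-1:ℝ)^i / (2*(i:ℝ)+1)) := by
    intro K
    induction K with
    | zero => simp
    | succ n ih =>
      rw [Finset.sum_range_succ, ih, show 2*(n+1) = 2*n+1+1 by ring,
        Finset.sum_range_succ, Finset.sum_range_succ]
      have p0 : ((-1:ℝ))^(2*n) = 1 := Even.neg_one_pow ⟨n, by ring⟩
      have p1 : ((-1:ℝ))^(2*n+1) = -1 := Odd.neg_one_pow ⟨n, by ring⟩
      simp only [hL, p0, p1]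
      rw [gt_aux_A5 astar π (n:ℝ) (ne_of_gt hπ) (by positivity) (by positivity)]
      push_cast
      ring
  have h2K : Tendsto (fun K : ℕ => 2*K) atTop atTop :=
    tendsto_atTop_atTop.mpr (fun b => ⟨b, fun a hab => by omega⟩)
  have hLtend : Tendsto (fun K => ∑ k ∈ Finset.range K, L k) atTop
      (𝓝 (astar/π * (π/4))) := by
    have := ((Real.tendsto_sum_pi_div_four.comp h2K).const_mul (astar/π))
    refine Tendsto.congr (fun K => ?_) this
    simpa [Function.comp] using (hps K).symm
  have hLtsum : ∑' k, L k = astar/4 := by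
    have h1 := hLsummable.hasSum.tendsto_sum_nat
    have h2 := tendsto_nhds_unique h1 hLtend
    rw [h2]
    field_simp
  -- assemble
  have hfin : Tendsto (fun ξ => 4 * D * ∑' k, P k ξ) (𝓝[>] (0:ℝ)) (𝓝 (astar * D)) := by
    have := hmain.const_mul (4*D)
    rw [hLtsum] at this
    convert this using 2
    ring
  exact Tendsto.congr' (EventuallyEq.symm heq) hfin
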